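/- (Integral turnpike estimate underlying Theorem 3.9.) Assume: H ∈ C²(𝕏, ℝ), 𝕐 := H_x(𝕏) is open, H_x : 𝕏 → 𝕐 is a C¹-diffeomorphism; S(x) = eᵀx with e ∈ ℝⁿ \ {0}; ⋂_{k=1}^N (J_k e)^⊥ ∩ 𝕐 ≠ ∅. Fix a compact set K ⊆ 𝕏, α₁, α₂, T₀ > 0, and a constant C₁ ≥ 0, and define ℓ(x,u) = (α₁ g(x)ᵀH_x(x) − α₂ T₀ g(x)ᵀS_x(x))ᵀ u. Then there exists C ≥ 0, depending only on K, C₁, α₁, α₂, T₀ and the system data (but not on t_f), such that for every t_f > 0 and every continuously differentiable solution x : [0,t_f] → 𝕏 of the RIPHS state equation with continuous control u satisfying x(t) ∈ K for all t ∈ [0,t_f] and ∫₀^{t_f} ℓ(x(t),u(t)) dt ≤ C₁, one has ∫₀^{t_f} dist(x(t), 𝒯)² dt ≤ C. -/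

import Mathlib

open Set Matrix Metric

/-- Matrix–vector multiplication on Euclidean space. -/
noncomputable def mv {a b : ℕ} (A : Matrix (Fin a) (Fin b) ℝ)
    (x : EuclideanSpace ℝ (Fin b)) : EuclideanSpace ℝ (Fin a) :=
  Matrix.toEuclideanLin A x

/-- The Poisson bracket `{S,H}_{J_k}(x) = eᵀ J_k H_x(x)` for the linear entropy `S(x) = eᵀx`. -/
noncomputable def brk {n : ℕ} (J : Matrix (Fin n) (Fin n) ℝ)
    (e Hx : EuclideanSpace ℝ (Fin n)) : ℝ :=
  inner ℝ e (mv J Hx)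

lemma inner_mv {a b : ℕ} (A : Matrix (Fin a) (Fin b) ℝ) (v : EuclideanSpace ℝ (Fin a))
    (w : EuclideanSpace ℝ (Fin b)) : (inner ℝ v (mv A w) : ℝ) = inner ℝ (mv Aᵀ v) w := by
  simp only [mv, Matrix.toEuclideanLin_apply, PiLp.inner_apply, RCLike.inner_apply,
    PiLp.toLp_apply, conj_trivial]
  simp only [Matrix.mulVec, dotProduct, Matrix.transpose_apply, Finset.mul_sum,
    Finset.sum_mul]
  rw [Finset.sum_comm]
  congr 1; ext i; congr 1; ext j; ring

lemma mv_add {a b : ℕ} (A B : Matrix (Fin a) (Fin b) ℝ) (x : EuclideanSpace ℝ (Fin b)) :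
    mv (A + B) x = mv A x + mv B x := by
  simp [mv]

lemma mv_sum {a b ι : ℕ} (A : Fin ι → Matrix (Fin a) (Fin b) ℝ) (x : EuclideanSpace ℝ (Fin b)) :
    mv (∑ k, A k) x = ∑ k, mv (A k) x := by
  simp [mv]

lemma mv_smul {a b : ℕ} (c : ℝ) (A : Matrix (Fin a) (Fin b) ℝ) (x : EuclideanSpace ℝ (Fin b)) :
    mv (c • A) x = c • mv A x := by
  simp [mv]

lemma mv_neg {a b : ℕ} (A : Matrix (Fin a) (Fin b) ℝ) (x : EuclideanSpace ℝ (Fin b)) :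
    mv (-A) x = -mv A x := by
  simp [mv]

lemma skew_inner_self {a : ℕ} {A : Matrix (Fin a) (Fin a) ℝ} (hA : Aᵀ = -A)
    (w : EuclideanSpace ℝ (Fin a)) : (inner ℝ w (mv A w) : ℝ) = 0 := by
  have h := inner_mv A w w
  rw [hA, mv_neg, inner_neg_left] at h
  rw [real_inner_comm] at h ⊢
  linarith

lemma mv_continuous {a b : ℕ} :
    Continuous (fun p : Matrix (Fin a) (Fin b) ℝ × EuclideanSpace ℝ (Fin b) => mv p.1 p.2) := by
  simp only [mv, Matrix.toEuclideanLin_apply]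
  apply Continuous.comp (PiLp.continuous_toLp 2 _)
  apply continuous_pi
  intro i
  simp only [Matrix.mulVec, dotProduct]
  apply continuous_finset_sum
  intro j _
  exact (((continuous_apply j).comp ((continuous_apply i).comp continuous_fst))).mul
    ((continuous_apply j).comp ((PiLp.continuous_ofLp 2 _).comp continuous_snd))

lemma euclid_norm_sq {N : ℕ} (z : EuclideanSpace ℝ (Fin N)) : ‖z‖ ^ 2 = ∑ k, z k ^ 2 := by
  rw [EuclideanSpace.norm_eq, Real.sq_sqrt (by positivity)]
  congr 1; ext k; rw [Real.norm_eq_abs, sq_abs]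

lemma proj_bound {n N : ℕ} (v : Fin N → EuclideanSpace ℝ (Fin n)) :
    ∃ c₀ : ℝ, 0 ≤ c₀ ∧ ∀ y : EuclideanSpace ℝ (Fin n),
      ‖y - (Submodule.orthogonalProjectionOnto (Submodule.span ℝ (Set.range v))ᗮ y : EuclideanSpace ℝ (Fin n))‖ ^ 2
        ≤ c₀ * ∑ k, (inner ℝ y (v k) : ℝ) ^ 2 := by
  set W := Submodule.span ℝ (Set.range v) with hW
  -- the linear map w ↦ (⟪v k, w⟫)_k
  let B : EuclideanSpace ℝ (Fin n) →ₗ[ℝ] EuclideanSpace ℝ (Fin N) :=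
    (WithLp.linearEquiv 2 ℝ (Fin N → ℝ)).symm.toLinearMap ∘ₗ
      LinearMap.pi (fun k => ((innerSL ℝ (v k)) : _ →L[ℝ] ℝ).toLinearMap)
  have hBapp : ∀ w k, B w k = (inner ℝ (v k) w : ℝ) := fun w k => rfl
  have hker : LinearMap.ker (B.domRestrict W) = ⊥ := by
    rw [LinearMap.ker_eq_bot']
    rintro ⟨w, hwW⟩ hw
    have hzero : ∀ k, (inner ℝ (v k) w : ℝ) = 0 := by
      intro k
      have := congrFun (congrArg (fun z : EuclideanSpace ℝ (Fin N) => (z : Fin N → ℝ)) hw) k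
      simpa [hBapp] using this
    have hmem : w ∈ Wᗮ := by
      rw [Submodule.mem_orthogonal]
      intro u hu
      induction hu using Submodule.span_induction with
      | mem z hz => obtain ⟨k, rfl⟩ := hz; exact hzero k
      | zero => simp
      | add a b _ _ ha hb => rw [inner_add_left, ha, hb, add_zero]
      | smul c a _ ha => rw [inner_smul_left, ha, mul_zero]
    have : w = 0 := by
      have := Submodule.mem_inf.2 ⟨hwW, hmem⟩
      rwa [Submodule.inf_orthogonal_eq_bot, Submodule.mem_bot] at this
    exact Subtype.ext this
  obtain ⟨c, hcpos, hc⟩ := (B.domRestrict W).exists_antilipschitzWith hker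
  refine ⟨(c : ℝ) ^ 2, by positivity, fun y => ?_⟩
  set P := Submodule.orthogonalProjectionOnto Wᗮ
  have hwmem : y - (P y : EuclideanSpace ℝ (Fin n)) ∈ W := by
    have := Submodule.sub_starProjection_mem_orthogonal (K := Wᗮ) y
    rwa [Submodule.orthogonal_orthogonal] at this
  set w : EuclideanSpace ℝ (Fin n) := y - (P y : EuclideanSpace ℝ (Fin n)) with hwdef
  have hnorm : ‖w‖ ≤ (c : ℝ) * ‖B.domRestrict W ⟨w, hwmem⟩‖ := by
    have h := hc.le_mul_dist ⟨w, hwmem⟩ 0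
    simpa [dist_eq_norm] using h
  have hBw : ∀ k, (inner ℝ (v k) w : ℝ) = (inner ℝ y (v k) : ℝ) := by
    intro k
    have hPy : (inner ℝ (v k) ((P y : EuclideanSpace ℝ (Fin n))) : ℝ) = 0 :=
      Submodule.inner_right_of_mem_orthogonal
        (Submodule.subset_span (Set.mem_range_self k)) (P y).2
    rw [hwdef, inner_sub_right, hPy, sub_zero, real_inner_comm]
  have hBnorm : ‖B.domRestrict W ⟨w, hwmem⟩‖ ^ 2 = ∑ k, (inner ℝ y (v k) : ℝ) ^ 2 := by
    rw [euclid_norm_sq]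
    congr 1; ext k
    rw [show (B.domRestrict W ⟨w, hwmem⟩) k = (inner ℝ (v k) w : ℝ) from rfl, hBw]
  calc ‖w‖ ^ 2 ≤ ((c : ℝ) * ‖B.domRestrict W ⟨w, hwmem⟩‖) ^ 2 := by
        apply sq_le_sq' _ hnorm
        have : (0:ℝ) ≤ (c : ℝ) * ‖B.domRestrict W ⟨w, hwmem⟩‖ := by positivity
        linarith [norm_nonneg w]
    _ = (c : ℝ) ^ 2 * ∑ k, (inner ℝ y (v k) : ℝ) ^ 2 := by rw [mul_pow, hBnorm]

lemma brk_eq_neg_inner {n : ℕ} {J : Matrix (Fin n) (Fin n) ℝ} (hJ : Jᵀ = -J)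
    (e y : EuclideanSpace ℝ (Fin n)) : brk J e y = -(inner ℝ y (mv J e) : ℝ) := by
  rw [brk, inner_mv, hJ, mv_neg, inner_neg_left, real_inner_comm]

lemma geom_est {n N : ℕ}
    (X : Set (EuclideanSpace ℝ (Fin n))) (hXopen : IsOpen X)
    (Hx : EuclideanSpace ℝ (Fin n) → EuclideanSpace ℝ (Fin n))
    (hHxcont : ContinuousOn Hx X)
    (hYopen : IsOpen (Hx '' X))
    (Hinv : EuclideanSpace ℝ (Fin n) → EuclideanSpace ℝ (Fin n))
    (hHinvmaps : ∀ y ∈ Hx '' X, Hinv y ∈ X)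
    (hHinvleft : ∀ p ∈ X, Hinv (Hx p) = p)
    (hHinvC1 : ContDiffOn ℝ 1 Hinv (Hx '' X))
    (e : EuclideanSpace ℝ (Fin n))
    (J : Fin N → Matrix (Fin n) (Fin n) ℝ)
    (hJskew : ∀ k, (J k)ᵀ = -(J k))
    (hVY : ({y : EuclideanSpace ℝ (Fin n) | ∀ k, (inner ℝ y (mv (J k) e) : ℝ) = 0}
        ∩ (Hx '' X)).Nonempty)
    (T : Set (EuclideanSpace ℝ (Fin n)))
    (hT : T = {p ∈ X | ∀ k, brk (J k) e (Hx p) = 0})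
    (K : Set (EuclideanSpace ℝ (Fin n))) (hK : IsCompact K) (hKX : K ⊆ X) :
    ∃ c : ℝ, 0 ≤ c ∧ ∀ p ∈ K, infDist p T ^ 2 ≤ c * ∑ k, brk (J k) e (Hx p) ^ 2 := by
  classical
  set v : Fin N → EuclideanSpace ℝ (Fin n) := fun k => mv (J k) e with hv
  set W := Submodule.span ℝ (Set.range v) with hWdef
  set P := Submodule.orthogonalProjectionOnto Wᗮ with hPdef
  -- right inverse of Hinv
  have hright : ∀ y ∈ Hx '' X, Hx (Hinv y) = y := by
    rintro y ⟨q, hq, rfl⟩; rw [hHinvleft q hq]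
  -- brk squared equals inner ℝ squared
  have hbrk2 : ∀ k (y : EuclideanSpace ℝ (Fin n)),
      brk (J k) e y ^ 2 = (inner ℝ y (v k) : ℝ) ^ 2 := by
    intro k y; rw [brk_eq_neg_inner (hJskew k), neg_pow, hv]; ring
  -- membership in T via V
  have hTmem : ∀ y ∈ Hx '' X, (∀ k, (inner ℝ y (v k) : ℝ) = 0) → Hinv y ∈ T := by
    intro y hy hyV
    rw [hT]
    refine ⟨hHinvmaps y hy, fun k => ?_⟩
    rw [hright y hy, brk_eq_neg_inner (hJskew k), hyV k, neg_zero]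
  -- T is nonempty
  obtain ⟨y₀, hy₀V, hy₀Y⟩ := hVY
  have hTne : T.Nonempty := ⟨Hinv y₀, hTmem y₀ hy₀Y hy₀V⟩
  -- bound for distance to T on K
  obtain ⟨R, hR⟩ := hK.exists_bound_of_continuousOn continuousOn_id
  have hdistbd : ∀ p ∈ K, infDist p T ≤ R + ‖Hinv y₀‖ := by
    intro p hp
    calc infDist p T ≤ dist p (Hinv y₀) := infDist_le_dist_of_mem (hTmem y₀ hy₀Y hy₀V)
      _ ≤ ‖p‖ + ‖Hinv y₀‖ := by
          rw [dist_eq_norm]; exact (norm_sub_le _ _)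
      _ ≤ R + ‖Hinv y₀‖ := by have := hR p hp; simp only [id] at this; linarith
  obtain ⟨c₀, hc₀, hproj⟩ := proj_bound v
  -- local estimate
  have hlocal : ∀ p₀ ∈ K, ∃ c : ℝ, 0 ≤ c ∧ ∃ U : Set (EuclideanSpace ℝ (Fin n)),
      U ∈ nhds p₀ ∧ ∀ p ∈ K ∩ U, infDist p T ^ 2 ≤ c * ∑ k, (inner ℝ (Hx p) (v k) : ℝ) ^ 2 := by
    intro p₀ hp₀
    have hp₀X : p₀ ∈ X := hKX hp₀
    have hHxat : ContinuousAt Hx p₀ := hHxcont.continuousAt (hXopen.mem_nhds hp₀X)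
    set b : EuclideanSpace ℝ (Fin n) → ℝ := fun p => ∑ k, (inner ℝ (Hx p) (v k) : ℝ) ^ 2 with hb
    have hbat : ContinuousAt b p₀ := by
      rw [hb]
      exact tendsto_finset_sum _ (fun k _ => (hHxat.inner continuousAt_const).pow 2)
    by_cases hcase : b p₀ = 0
    · -- p₀ is (close to) an equilibrium: use the diffeomorphism and projection
      have hbk0 : ∀ k, (inner ℝ (Hx p₀) (v k) : ℝ) = 0 := by
        intro k
        have h2 := (Finset.sum_eq_zero_iff_of_nonneg
          (fun j _ => sq_nonneg ((inner ℝ (Hx p₀) (v j) : ℝ)))).1 hcase k (Finset.mem_univ k)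
        exact pow_eq_zero_iff two_ne_zero |>.1 h2
      set y₁ := Hx p₀ with hy₁
      have hy₁Y : y₁ ∈ Hx '' X := ⟨p₀, hp₀X, rfl⟩
      have hy₁V : y₁ ∈ Wᗮ := by
        rw [Submodule.mem_orthogonal]
        intro u hu
        induction hu using Submodule.span_induction with
        | mem z hz => obtain ⟨k, rfl⟩ := hz; rw [real_inner_comm]; exact hbk0 k
        | zero => simp
        | add a b _ _ ha hb => rw [inner_add_left, ha, hb, add_zero]
        | smul t a _ ha => rw [inner_smul_left, ha, mul_zero]
      -- Lipschitz bound for Hinv near y₁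
      have hCAt : ContDiffAt ℝ 1 Hinv y₁ :=
        hHinvC1.contDiffAt (hYopen.mem_nhds hy₁Y)
      obtain ⟨L, t, htmem, hLip⟩ := hCAt.exists_lipschitzOnWith
      obtain ⟨ρ, hρpos, hρball⟩ := Metric.mem_nhds_iff.1
        (Filter.inter_mem htmem (hYopen.mem_nhds hy₁Y))
      refine ⟨(L:ℝ)^2 * c₀, by positivity, Hx ⁻¹' Metric.ball y₁ ρ,
        hHxat.preimage_mem_nhds (Metric.ball_mem_nhds _ hρpos), ?_⟩
      rintro p ⟨hpK, hpU⟩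
      have hpX : p ∈ X := hKX hpK
      set y := Hx p with hy
      have hyball : y ∈ Metric.ball y₁ ρ := hpU
      have hyY : y ∈ Hx '' X := hρball hyball |>.2
      have hyt : y ∈ t := (hρball hyball).1
      -- the projection of y
      set z := (P y : EuclideanSpace ℝ (Fin n)) with hz
      have hPy₁ : (P y₁ : EuclideanSpace ℝ (Fin n)) = y₁ :=
        Submodule.starProjection_eq_self_iff.2 hy₁V
      have hzy₁ : ‖z - y₁‖ ≤ ‖y - y₁‖ := by
        have heq : z - y₁ = ((P (y - y₁) : Wᗮ) : EuclideanSpace ℝ (Fin n)) := by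
          rw [map_sub, Submodule.coe_sub, hPy₁, hz]
        rw [heq]
        calc ‖((P (y - y₁) : Wᗮ) : EuclideanSpace ℝ (Fin n))‖
            ≤ ‖P‖ * ‖y - y₁‖ := P.le_opNorm _
          _ ≤ 1 * ‖y - y₁‖ :=
              mul_le_mul_of_nonneg_right (Submodule.orthogonalProjectionOnto_norm_le _) (norm_nonneg _)
          _ = ‖y - y₁‖ := one_mul _
      have hzball : z ∈ Metric.ball y₁ ρ := by
        rw [Metric.mem_ball, dist_eq_norm]
        calc ‖z - y₁‖ ≤ ‖y - y₁‖ := hzy₁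
          _ < ρ := by rw [← dist_eq_norm]; exact hyball
      have hzY : z ∈ Hx '' X := (hρball hzball).2
      have hzt : z ∈ t := (hρball hzball).1
      have hzV : ∀ k, (inner ℝ z (v k) : ℝ) = 0 := fun k =>
        Submodule.inner_left_of_mem_orthogonal
          (Submodule.subset_span (Set.mem_range_self k)) (P y).2
      have hqT : Hinv z ∈ T := hTmem z hzY hzV
      have hdist : infDist p T ≤ (L : ℝ) * ‖y - z‖ := by
        calc infDist p T ≤ dist p (Hinv z) := infDist_le_dist_of_mem hqT
          _ = dist (Hinv y) (Hinv z) := by rw [hy, hHinvleft p hpX]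
          _ ≤ (L : ℝ) * dist y z := hLip.dist_le_mul y hyt z hzt
          _ = (L : ℝ) * ‖y - z‖ := by rw [dist_eq_norm]
      have hsq : infDist p T ^ 2 ≤ ((L : ℝ) * ‖y - z‖) ^ 2 := by
        apply sq_le_sq' _ hdist
        have h0 : (0:ℝ) ≤ (L:ℝ) * ‖y - z‖ := by positivity
        linarith [infDist_nonneg (x := p) (s := T)]
      calc infDist p T ^ 2 ≤ ((L : ℝ) * ‖y - z‖) ^ 2 := hsq
        _ = (L : ℝ) ^ 2 * ‖y - z‖ ^ 2 := by ring
        _ ≤ (L : ℝ) ^ 2 * (c₀ * ∑ k, (inner ℝ y (v k) : ℝ) ^ 2) := by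
            apply mul_le_mul_of_nonneg_left _ (by positivity)
            exact hproj y
        _ = (L : ℝ) ^ 2 * c₀ * ∑ k, (inner ℝ (Hx p) (v k) : ℝ) ^ 2 := by rw [hy]; ring
    · -- b p₀ ≠ 0 : bounded distance over positive lower bound for b
      have hbpos : 0 < b p₀ := lt_of_le_of_ne (Finset.sum_nonneg fun k _ => sq_nonneg _)
        (Ne.symm hcase)
      have hU : {p | b p₀ / 2 < b p} ∈ nhds p₀ :=
        hbat.preimage_mem_nhds (Ioi_mem_nhds (by linarith))
      refine ⟨(R + ‖Hinv y₀‖)^2 / (b p₀ / 2), by positivity, _, hU, ?_⟩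
      rintro p ⟨hpK, hpU⟩
      have h1 : infDist p T ^ 2 ≤ (R + ‖Hinv y₀‖)^2 := by
        apply sq_le_sq' _ (hdistbd p hpK)
        have := infDist_nonneg (x := p) (s := T)
        have : (0:ℝ) ≤ R + ‖Hinv y₀‖ := le_trans infDist_nonneg (hdistbd p hpK)
        linarith [infDist_nonneg (x := p) (s := T)]
      have h2 : b p₀ / 2 < b p := hpU
      calc infDist p T ^ 2 ≤ (R + ‖Hinv y₀‖)^2 := h1
        _ = (R + ‖Hinv y₀‖)^2 / (b p₀/2) * (b p₀/2) := by field_simp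
        _ ≤ (R + ‖Hinv y₀‖)^2 / (b p₀/2) * b p := by
            apply mul_le_mul_of_nonneg_left (le_of_lt h2) (by positivity)
  -- globalize by compactness
  choose! c hc U hU hloc using hlocal
  obtain ⟨s, hsK, hscover⟩ := hK.elim_nhds_subcover U (fun p hp => hU p hp)
  refine ⟨∑ p ∈ s, c p, Finset.sum_nonneg (fun p hp => hc p (hsK _ hp)), fun p hp => ?_⟩
  obtain ⟨p₀, hp₀s, hpU⟩ := Set.mem_iUnion₂.1 (hscover hp)
  have hsum : ∑ k, brk (J k) e (Hx p) ^ 2 = ∑ k, (inner ℝ (Hx p) (v k) : ℝ) ^ 2 :=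
    Finset.sum_congr rfl (fun k _ => hbrk2 k (Hx p))
  rw [hsum]
  calc infDist p T ^ 2 ≤ c p₀ * ∑ k, (inner ℝ (Hx p) (v k) : ℝ) ^ 2 :=
        hloc p₀ (hsK _ hp₀s) p ⟨hp, hpU⟩
    _ ≤ (∑ q ∈ s, c q) * ∑ k, (inner ℝ (Hx p) (v k) : ℝ) ^ 2 := by
        apply mul_le_mul_of_nonneg_right _ (Finset.sum_nonneg fun k _ => sq_nonneg _)
        exact Finset.single_le_sum (fun q hq => hc q (hsK _ hq)) hp₀s

lemma power_balance {n N m : ℕ}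
    (J0m : Matrix (Fin n) (Fin n) ℝ) (hJ0skew : J0mᵀ = -J0m)
    (e : EuclideanSpace ℝ (Fin n)) (hCas : mv J0m e = 0)
    (J : Fin N → Matrix (Fin n) (Fin n) ℝ) (hJskew : ∀ k, (J k)ᵀ = -(J k))
    (g : Matrix (Fin n) (Fin m) ℝ) (γv : Fin N → ℝ)
    (Hxp : EuclideanSpace ℝ (Fin n)) (u : EuclideanSpace ℝ (Fin m)) (α₁ c : ℝ) :
    α₁ * (inner ℝ Hxp (mv (J0m + ∑ k, (γv k * brk (J k) e Hxp) • J k) Hxp + mv g u) : ℝ)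
      - c * (inner ℝ e (mv (J0m + ∑ k, (γv k * brk (J k) e Hxp) • J k) Hxp + mv g u) : ℝ)
    = (inner ℝ (α₁ • mv gᵀ Hxp - c • mv gᵀ e) u : ℝ)
      - c * ∑ k, γv k * brk (J k) e Hxp ^ 2 := by
  set A := J0m + ∑ k, (γv k * brk (J k) e Hxp) • J k with hA
  have hAskew : Aᵀ = -A := by
    rw [hA, Matrix.transpose_add, Matrix.transpose_sum, hJ0skew, neg_add]
    congr 1
    rw [← Finset.sum_neg_distrib]
    exact Finset.sum_congr rfl fun k _ => by rw [Matrix.transpose_smul, hJskew k, smul_neg]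
  have h1 : (inner ℝ Hxp (mv A Hxp) : ℝ) = 0 := skew_inner_self hAskew Hxp
  have h2 : (inner ℝ e (mv A Hxp) : ℝ) = ∑ k, γv k * brk (J k) e Hxp ^ 2 := by
    rw [hA, mv_add, mv_sum, inner_add_right, inner_sum]
    have hJ0part : (inner ℝ e (mv J0m Hxp) : ℝ) = 0 := by
      rw [inner_mv, hJ0skew, mv_neg, hCas, neg_zero, inner_zero_left]
    rw [hJ0part, zero_add]
    exact Finset.sum_congr rfl fun k _ => by
      rw [mv_smul, real_inner_smul_right, brk]; ring
  have h3 : (inner ℝ Hxp (mv g u) : ℝ) = (inner ℝ (mv gᵀ Hxp) u : ℝ) := inner_mv g Hxp u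
  have h4 : (inner ℝ e (mv g u) : ℝ) = (inner ℝ (mv gᵀ e) u : ℝ) := inner_mv g e u
  rw [inner_add_right, inner_add_right, h1, h2, h3, h4, inner_sub_left,
    real_inner_smul_left, real_inner_smul_left]
  ring

lemma continuous_mv {a b : ℕ} (A : Matrix (Fin a) (Fin b) ℝ) : Continuous (mv A) :=
  LinearMap.continuous_of_finiteDimensional (Matrix.toEuclideanLin A)

lemma continuous_brk {n : ℕ} (Jm : Matrix (Fin n) (Fin n) ℝ) (e : EuclideanSpace ℝ (Fin n)) :
    Continuous (fun y => brk Jm e y) := by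
  unfold brk
  exact continuous_const.inner (continuous_mv Jm)

lemma contOn_sum {N : ℕ} {s : Set ℝ} {f : Fin N → ℝ → ℝ} (h : ∀ k, ContinuousOn (f k) s) :
    ContinuousOn (fun t => ∑ k, f k t) s := fun t ht =>
  tendsto_finset_sum _ fun k _ => h k t ht

lemma continuous_transpose {a b : ℕ} :
    Continuous fun A : Matrix (Fin a) (Fin b) ℝ => Aᵀ :=
  continuous_pi fun i => continuous_pi fun j => (continuous_apply i).comp (continuous_apply j)

set_option maxHeartbeats 1000000 in
/-- Integral turnpike estimate towards the set of thermodynamic equilibria: for any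
compact `K ⊆ 𝕏` and cost bound `C₁`, there is `C ≥ 0` independent of the horizon such
that every solution of the RIPHS staying in `K` whose supply cost is at most `C₁`
satisfies `∫₀^{t_f} dist(x(t),𝒯)² dt ≤ C`. -/
theorem integral_turnpike_estimate
    (n N m : ℕ)
    (X : Set (EuclideanSpace ℝ (Fin n))) (hXopen : IsOpen X)
    -- H ∈ C², with gradient Hx and Hessian Hxx
    (H : EuclideanSpace ℝ (Fin n) → ℝ)
    (Hx : EuclideanSpace ℝ (Fin n) → EuclideanSpace ℝ (Fin n))
    (Hxx : EuclideanSpace ℝ (Fin n) → Matrix (Fin n) (Fin n) ℝ)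
    (hH : ∀ p ∈ X, HasGradientAt H (Hx p) p)
    (hHx : ∀ p ∈ X,
      HasFDerivAt Hx (LinearMap.toContinuousLinearMap (Matrix.toEuclideanLin (Hxx p))) p)
    (hHxxcont : ContinuousOn Hxx X)
    -- 𝕐 = H_x(𝕏) is open and H_x : 𝕏 → 𝕐 is a C¹-diffeomorphism with inverse Hinv
    (hYopen : IsOpen (Hx '' X))
    (Hinv : EuclideanSpace ℝ (Fin n) → EuclideanSpace ℝ (Fin n))
    (hHinvmaps : ∀ y ∈ Hx '' X, Hinv y ∈ X)
    (hHinvleft : ∀ p ∈ X, Hinv (Hx p) = p)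
    (hHinvC1 : ContDiffOn ℝ 1 Hinv (Hx '' X))
    -- entropy S(x) = eᵀ x, e ≠ 0
    (e : EuclideanSpace ℝ (Fin n)) (he : e ≠ 0)
    (S : EuclideanSpace ℝ (Fin n) → ℝ) (hS : ∀ p, S p = (inner ℝ e p : ℝ))
    -- Poisson structure matrix field J₀, with Casimir e
    (J0 : EuclideanSpace ℝ (Fin n) → Matrix (Fin n) (Fin n) ℝ)
    (hJ0cont : ContinuousOn J0 X)
    (hJ0skew : ∀ p ∈ X, (J0 p)ᵀ = -(J0 p))
    (hCasimir : ∀ p ∈ X, mv (J0 p) e = 0)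
    -- skew-symmetric structure matrices and positive continuous γ_k
    (J : Fin N → Matrix (Fin n) (Fin n) ℝ)
    (hJskew : ∀ k, (J k)ᵀ = -(J k))
    (γ : Fin N → EuclideanSpace ℝ (Fin n) → ℝ)
    (hγpos : ∀ k, ∀ p ∈ X, 0 < γ k p)
    (hγcont : ∀ k, ContinuousOn (γ k) X)
    -- continuous input matrix
    (g : EuclideanSpace ℝ (Fin n) → Matrix (Fin n) (Fin m) ℝ)
    (hgcont : ContinuousOn g X)
    -- V = ⋂_k (J_k e)^⊥ meets 𝕐
    (hVY : ({y : EuclideanSpace ℝ (Fin n) | ∀ k, (inner ℝ y (mv (J k) e) : ℝ) = 0}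
        ∩ (Hx '' X)).Nonempty)
    -- the set of thermodynamic equilibria
    (T : Set (EuclideanSpace ℝ (Fin n)))
    (hT : T = {p ∈ X | ∀ k, brk (J k) e (Hx p) = 0})
    -- compact set, cost coefficients and cost bound
    (K : Set (EuclideanSpace ℝ (Fin n))) (hK : IsCompact K) (hKX : K ⊆ X)
    (α₁ α₂ T₀ : ℝ) (hα₁ : 0 < α₁) (hα₂ : 0 < α₂) (hT₀ : 0 < T₀)
    (C₁ : ℝ) (hC₁ : 0 ≤ C₁) :
    ∃ C : ℝ, 0 ≤ C ∧
      ∀ (tf : ℝ), 0 < tf →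
      ∀ (x : ℝ → EuclideanSpace ℝ (Fin n)) (u : ℝ → EuclideanSpace ℝ (Fin m))
        (x' : ℝ → EuclideanSpace ℝ (Fin n)),
        ContinuousOn u (Icc 0 tf) →
        (∀ t ∈ Icc 0 tf, x t ∈ K) →
        ContinuousOn x' (Icc 0 tf) →
        (∀ t ∈ Icc 0 tf, HasDerivWithinAt x (x' t) (Icc 0 tf) t) →
        (∀ t ∈ Icc 0 tf,
          x' t =
            mv (J0 (x t) + ∑ k, (γ k (x t) * brk (J k) e (Hx (x t))) • J k) (Hx (x t))
              + mv (g (x t)) (u t)) →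
        (∫ t in (0:ℝ)..tf,
            (inner ℝ (α₁ • mv (g (x t))ᵀ (Hx (x t)) - (α₂ * T₀) • mv (g (x t))ᵀ e)
              (u t) : ℝ)) ≤ C₁ →
        (∫ t in (0:ℝ)..tf, infDist (x t) T ^ 2) ≤ C := by
  classical
  rcases K.eq_empty_or_nonempty with hKe | hKne
  · refine ⟨0, le_refl 0, fun tf htf x u x' _ hxK _ _ _ _ => ?_⟩
    exact absurd (hxK 0 ⟨le_refl 0, htf.le⟩) (by simp [hKe])
  -- continuity of Hx on X
  have hHxcont : ContinuousOn Hx X := fun p hp => (hHx p hp).continuousAt.continuousWithinAt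
  -- geometric estimate
  obtain ⟨c, hc0, hgeom⟩ := geom_est X hXopen Hx hHxcont hYopen Hinv hHinvmaps hHinvleft
    hHinvC1 e J hJskew hVY T hT K hK hKX
  -- lower bound for γ on K
  obtain ⟨δ, hδpos, hδ⟩ : ∃ δ : ℝ, 0 < δ ∧ ∀ k, ∀ p ∈ K, δ ≤ γ k p := by
    have hper : ∀ k : Fin N, ∃ d : ℝ, 0 < d ∧ ∀ p ∈ K, d ≤ γ k p := by
      intro k
      obtain ⟨p₀, hp₀, hmin⟩ := hK.exists_isMinOn hKne ((hγcont k).mono hKX)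
      exact ⟨γ k p₀, hγpos k p₀ (hKX hp₀), fun p hp => hmin hp⟩
    choose δf hδfpos hδf using hper
    rcases isEmpty_or_nonempty (Fin N) with hN | hN
    · exact ⟨1, one_pos, fun k => isEmptyElim k⟩
    · refine ⟨Finset.univ.inf' Finset.univ_nonempty δf, ?_, fun k p hp => ?_⟩
      · exact (Finset.lt_inf'_iff _).2 fun k _ => hδfpos k
      · exact le_trans (Finset.inf'_le δf (Finset.mem_univ k)) (hδf k p hp)
  -- bound for the storage function F on K
  set F : EuclideanSpace ℝ (Fin n) → ℝ :=
    fun p => α₁ * H p - (α₂ * T₀) * (inner ℝ e p : ℝ) with hF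
  have hHcont : ContinuousOn H X := fun p hp =>
    (hasGradientAt_iff_hasFDerivAt.1 (hH p hp)).continuousAt.continuousWithinAt
  have hFcont : ContinuousOn F X := by
    rw [hF]
    exact (continuousOn_const.mul hHcont).sub
      (continuousOn_const.mul ((continuous_const.inner continuous_id).continuousOn))
  obtain ⟨M, hM⟩ := hK.exists_bound_of_continuousOn (hFcont.mono hKX)
  set M' := max M 0 with hM'
  have hM'0 : 0 ≤ M' := le_max_right _ _
  have hMK : ∀ p ∈ K, |F p| ≤ M' := fun p hp =>
    le_trans (by simpa [Real.norm_eq_abs] using hM p hp) (le_max_left _ _)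
  -- the constant
  set c₂ : ℝ := c / (δ * (α₂ * T₀)) with hc₂
  have hc₂0 : 0 ≤ c₂ := by positivity
  refine ⟨c₂ * (C₁ + 2 * M'), by positivity, ?_⟩
  intro tf htf x u x' hu hxK hx'cont hx' hODE hcost
  have hxcont : ContinuousOn x (Icc 0 tf) := fun t ht => (hx' t ht).continuousWithinAt
  have hxX : ∀ t ∈ Icc 0 tf, x t ∈ X := fun t ht => hKX (hxK t ht)
  have huIcc : uIcc (0:ℝ) tf = Icc 0 tf := uIcc_of_le htf.le
  -- the running cost and dissipation
  set ℓ : ℝ → ℝ := fun t =>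
    (inner ℝ (α₁ • mv (g (x t))ᵀ (Hx (x t)) - (α₂ * T₀) • mv (g (x t))ᵀ e) (u t) : ℝ) with hℓ
  set q : ℝ → ℝ :=
    fun t => (α₂ * T₀) * ∑ k, γ k (x t) * brk (J k) e (Hx (x t)) ^ 2 with hq
  -- continuity of the pieces
  have hHxx' : ContinuousOn (fun t => Hx (x t)) (Icc 0 tf) := hHxcont.comp hxcont hxX
  have hgx : ContinuousOn (fun t => (g (x t))ᵀ) (Icc 0 tf) :=
    continuous_transpose.comp_continuousOn (hgcont.comp hxcont hxX)
  have hℓcont : ContinuousOn ℓ (Icc 0 tf) := by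
    rw [hℓ]
    apply ContinuousOn.inner _ hu
    exact ((mv_continuous.comp_continuousOn (hgx.prodMk hHxx')).const_smul α₁).sub
      ((mv_continuous.comp_continuousOn (hgx.prodMk continuousOn_const)).const_smul (α₂ * T₀))
  have hqcont : ContinuousOn q (Icc 0 tf) := by
    rw [hq]
    apply continuousOn_const.mul
    apply contOn_sum
    intro k
    exact ContinuousOn.mul ((hγcont k).comp hxcont hxX)
      (((continuous_brk (J k) e).comp_continuousOn hHxx').pow 2)
  have hℓint : IntervalIntegrable ℓ MeasureTheory.volume 0 tf :=
    hℓcont.intervalIntegrable_of_Icc htf.le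
  have hqint : IntervalIntegrable q MeasureTheory.volume 0 tf :=
    hqcont.intervalIntegrable_of_Icc htf.le
  have hdcont : ContinuousOn (fun t => infDist (x t) T ^ 2) (Icc 0 tf) :=
    (((continuous_infDist_pt T).comp_continuousOn hxcont)).pow 2
  have hdint : IntervalIntegrable (fun t => infDist (x t) T ^ 2) MeasureTheory.volume 0 tf :=
    hdcont.intervalIntegrable_of_Icc htf.le
  -- derivative of F along the trajectory
  have key : ∀ t ∈ Icc 0 tf,
      HasDerivWithinAt (fun τ => F (x τ)) (ℓ t - q t) (Icc 0 tf) t := by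
    intro t ht
    have hpX : x t ∈ X := hxX t ht
    have hd1 : HasDerivWithinAt (fun τ => H (x τ))
        ((inner ℝ (Hx (x t)) (x' t) : ℝ)) (Icc 0 tf) t := by
      have := (hasGradientAt_iff_hasFDerivAt.1 (hH _ hpX)).comp_hasDerivWithinAt t (hx' t ht)
      simpa [InnerProductSpace.toDual_apply_apply, Function.comp_def] using this
    have hd2 : HasDerivWithinAt (fun τ => (inner ℝ e (x τ) : ℝ))
        ((inner ℝ e (x' t) : ℝ)) (Icc 0 tf) t := by
      have := (innerSL ℝ e).hasFDerivAt.comp_hasDerivWithinAt t (hx' t ht)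
      simpa [Function.comp_def] using this
    have hcomb := (hd1.const_mul α₁).sub (hd2.const_mul (α₂ * T₀))
    have heq : α₁ * (inner ℝ (Hx (x t)) (x' t) : ℝ) - (α₂ * T₀) * (inner ℝ e (x' t) : ℝ)
        = ℓ t - q t := by
      rw [hODE t ht, hℓ, hq]
      exact power_balance (J0 (x t)) (hJ0skew _ hpX) e (hCasimir _ hpX) J hJskew
        (g (x t)) (fun k => γ k (x t)) (Hx (x t)) (u t) α₁ (α₂ * T₀)
    rw [hF]
    exact heq ▸ hcomb
  -- fundamental theorem of calculus
  have hFTC : (∫ t in (0:ℝ)..tf, (ℓ t - q t)) = F (x tf) - F (x 0) := by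
    apply intervalIntegral.integral_eq_sub_of_hasDeriv_right_of_le htf.le
    · exact (hFcont.comp hxcont hxX)
    · intro t ht
      exact ((key t (Ioo_subset_Icc_self ht)).hasDerivAt
        (Icc_mem_nhds ht.1 ht.2)).hasDerivWithinAt
    · exact hℓint.sub hqint
  have hsplit : (∫ t in (0:ℝ)..tf, (ℓ t - q t))
      = (∫ t in (0:ℝ)..tf, ℓ t) - ∫ t in (0:ℝ)..tf, q t :=
    intervalIntegral.integral_sub hℓint hqint
  have hqbound : (∫ t in (0:ℝ)..tf, q t) ≤ C₁ + 2 * M' := by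
    have h0K : x 0 ∈ K := hxK 0 ⟨le_refl 0, htf.le⟩
    have htfK : x tf ∈ K := hxK tf ⟨htf.le, le_refl tf⟩
    have h1 := abs_le.1 (hMK _ h0K)
    have h2 := abs_le.1 (hMK _ htfK)
    have : (∫ t in (0:ℝ)..tf, q t) = (∫ t in (0:ℝ)..tf, ℓ t) - (F (x tf) - F (x 0)) := by
      rw [← hFTC, hsplit]; ring
    rw [this]
    have hcost' : (∫ t in (0:ℝ)..tf, ℓ t) ≤ C₁ := hcost
    linarith
  -- pointwise comparison
  have hpoint : ∀ t ∈ Icc 0 tf, infDist (x t) T ^ 2 ≤ c₂ * q t := by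
    intro t ht
    have hpK : x t ∈ K := hxK t ht
    have h1 : infDist (x t) T ^ 2 ≤ c * ∑ k, brk (J k) e (Hx (x t)) ^ 2 :=
      hgeom (x t) hpK
    have h2 : δ * ∑ k, brk (J k) e (Hx (x t)) ^ 2
        ≤ ∑ k, γ k (x t) * brk (J k) e (Hx (x t)) ^ 2 := by
      rw [Finset.mul_sum]
      apply Finset.sum_le_sum
      intro k _
      exact mul_le_mul_of_nonneg_right (hδ k _ hpK) (sq_nonneg _)
    have h3 : c * ∑ k, brk (J k) e (Hx (x t)) ^ 2 ≤ c₂ * q t := by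
      have hqt : q t = (α₂ * T₀) * ∑ k, γ k (x t) * brk (J k) e (Hx (x t)) ^ 2 := rfl
      rw [hqt, hc₂, div_mul_eq_mul_div, le_div_iff₀ (by positivity : (0:ℝ) < δ * (α₂ * T₀))]
      calc c * (∑ k, brk (J k) e (Hx (x t)) ^ 2) * (δ * (α₂ * T₀))
          = c * (α₂ * T₀) * (δ * ∑ k, brk (J k) e (Hx (x t)) ^ 2) := by ring
        _ ≤ c * (α₂ * T₀) * (∑ k, γ k (x t) * brk (J k) e (Hx (x t)) ^ 2) := by
            apply mul_le_mul_of_nonneg_left h2 (by positivity)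
        _ = c * ((α₂ * T₀) * ∑ k, γ k (x t) * brk (J k) e (Hx (x t)) ^ 2) := by ring
    exact le_trans h1 h3
  calc (∫ t in (0:ℝ)..tf, infDist (x t) T ^ 2)
      ≤ ∫ t in (0:ℝ)..tf, c₂ * q t := by
        apply intervalIntegral.integral_mono_on htf.le hdint (hqint.const_mul c₂)
        exact hpoint
    _ = c₂ * ∫ t in (0:ℝ)..tf, q t := intervalIntegral.integral_const_mul c₂ q
    _ ≤ c₂ * (C₁ + 2 * M') := mul_le_mul_of_nonneg_left hqbound hc₂0
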